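/- arXiv:2603.14904 — 3 statements merged into one kernel-verified Lean document; each statement's English description precedes it below -/
import Mathlib

section
/- Let f: [0,1] → ℝ be continuous and let (pₙ, qₙ): [0,1] → ℕ × ℕ* be a uniform rational approximation, i.e. pₙ(x)/qₙ(x) ∈ [0,1] for all x, inf_{x∈[0,1]} qₙ(x) → ∞, and sup_{x∈[0,1]} |pₙ(x)/qₙ(x) − x| → 0 as n → ∞. Then sup_{x∈[0,1]} |∫₀¹ ρ_{pₙ(x), qₙ(x)−pₙ(x)}(s) f(s) ds − f(x)| → 0 as n → ∞. -/
/-- The density of the Beta distribution `Be(k+1, l+1)` on `[0,1]`. -/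
noncomputable def rho (k l : ℕ) (s : ℝ) : ℝ :=
  ((k + l + 1).factorial : ℝ) / (k.factorial * l.factorial) * s ^ k * (1 - s) ^ l

lemma beta_int : ∀ (l k : ℕ), ∫ s in (0:ℝ)..1, s^k*(1-s)^l
    = (k.factorial * l.factorial : ℝ)/((k+l+1).factorial) := by
  intro l
  induction l with
  | zero =>
    intro k
    simp only [pow_zero, mul_one, integral_pow, Nat.add_zero, Nat.factorial]
    have h2 : ((k).factorial : ℝ) ≠ 0 := Nat.cast_ne_zero.2 (Nat.factorial_ne_zero _)
    push_cast
    rw [eq_div_iff (by positivity)]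
    field_simp
    simp
  | succ l ih =>
    intro k
    have h1 : (∫ s in (0:ℝ)..1, s^k*(1-s)^(l+1))
        = (∫ s in (0:ℝ)..1, s^k*(1-s)^l) - (∫ s in (0:ℝ)..1, s^(k+1)*(1-s)^l) := by
      rw [← intervalIntegral.integral_sub (Continuous.intervalIntegrable (by continuity) _ _)
        (Continuous.intervalIntegrable (by continuity) _ _)]
      apply intervalIntegral.integral_congr
      intro s _
      ring
    rw [h1, ih k, ih (k+1)]
    have e1 : ((k+(l+1)+1).factorial : ℝ) = (k+l+2) * (k+l+1).factorial := by
      have : k+(l+1)+1 = (k+l+1)+1 := by ring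
      rw [this, Nat.factorial_succ]; push_cast; ring
    have e2 : ((k+1+l+1).factorial : ℝ) = (k+l+2) * (k+l+1).factorial := by
      have : k+1+l+1 = (k+l+1)+1 := by ring
      rw [this, Nat.factorial_succ]; push_cast; ring
    have e3 : ((l+1).factorial : ℝ) = (l+1) * l.factorial := by
      rw [Nat.factorial_succ]; push_cast; ring
    have e4 : ((k+1).factorial : ℝ) = (k+1) * k.factorial := by
      rw [Nat.factorial_succ]; push_cast; ring
    rw [e1, e2, e3, e4]
    have h2 : ((k+l+1).factorial : ℝ) ≠ 0 := Nat.cast_ne_zero.2 (Nat.factorial_ne_zero _)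
    have h3 : ((k:ℝ)+l+2) ≠ 0 := by positivity
    field_simp
    ring

lemma fact_ne (n : ℕ) : ((n.factorial : ℝ)) ≠ 0 := Nat.cast_ne_zero.2 (Nat.factorial_ne_zero _)

lemma rho_cont (k l : ℕ) : Continuous (rho k l) := by
  unfold rho; continuity

lemma rho_nonneg (k l : ℕ) {s : ℝ} (hs : s ∈ Set.Icc (0:ℝ) 1) : 0 ≤ rho k l s := by
  obtain ⟨h0, h1⟩ := hs
  unfold rho
  have : (0:ℝ) ≤ 1 - s := by linarith
  positivity

lemma rho_int_one (k l : ℕ) : ∫ s in (0:ℝ)..1, rho k l s = 1 := by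
  have h : ∀ s : ℝ, rho k l s
      = ((k + l + 1).factorial : ℝ) / (k.factorial * l.factorial) * (s^k*(1-s)^l) := by
    intro s; unfold rho; ring
  simp only [h]
  rw [intervalIntegral.integral_const_mul, beta_int]
  field_simp

lemma rho_moment (k l : ℕ) (x : ℝ) : ∫ s in (0:ℝ)..1, rho k l s * (s-x)^2
    = ((k:ℝ)+1)*((k:ℝ)+2)/((((k:ℝ)+l+2))*((k:ℝ)+l+3)) - 2*x*((k:ℝ)+1)/((k:ℝ)+l+2) + x^2 := by
  have hexp : ∀ s : ℝ, rho k l s * (s-x)^2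
      = ((k + l + 1).factorial : ℝ) / (k.factorial * l.factorial) *
        (s^(k+2)*(1-s)^l) - 2*x*(((k + l + 1).factorial : ℝ) / (k.factorial * l.factorial)) *
        (s^(k+1)*(1-s)^l) + x^2*(((k + l + 1).factorial : ℝ) / (k.factorial * l.factorial)) *
        (s^k*(1-s)^l) := by
    intro s; unfold rho; ring
  simp only [hexp]
  rw [intervalIntegral.integral_add, intervalIntegral.integral_sub,
    intervalIntegral.integral_const_mul, intervalIntegral.integral_const_mul,
    intervalIntegral.integral_const_mul, beta_int, beta_int, beta_int]
  · have e0 : ((k+2+l+1).factorial : ℝ) = ((k:ℝ)+l+3)*((k:ℝ)+l+2)*((k+l+1).factorial) := by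
      have : k+2+l+1 = (k+l+1)+1+1 := by ring
      rw [this, Nat.factorial_succ, Nat.factorial_succ]; push_cast; ring
    have e1 : ((k+1+l+1).factorial : ℝ) = ((k:ℝ)+l+2)*((k+l+1).factorial) := by
      have : k+1+l+1 = (k+l+1)+1 := by ring
      rw [this, Nat.factorial_succ]; push_cast; ring
    have e2 : ((k+2).factorial : ℝ) = ((k:ℝ)+2)*((k:ℝ)+1)*(k.factorial) := by
      rw [Nat.factorial_succ, Nat.factorial_succ]; push_cast; ring
    have e3 : ((k+1).factorial : ℝ) = ((k:ℝ)+1)*(k.factorial) := by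
      rw [Nat.factorial_succ]; push_cast; ring
    rw [e0, e1, e2, e3]
    have h1 := fact_ne k
    have h2 := fact_ne l
    have h3 := fact_ne (k+l+1)
    have h4 : ((k:ℝ)+l+2) ≠ 0 := by positivity
    have h5 : ((k:ℝ)+l+3) ≠ 0 := by positivity
    field_simp
  all_goals exact Continuous.intervalIntegrable (by continuity) _ _

lemma rho_sq_le (k l : ℕ) (x : ℝ) : (∫ s in (0:ℝ)..1, rho k l s * (s-x)^2)
    ≤ 1/(4*((k:ℝ)+l+3)) + (((k:ℝ)+1)/((k:ℝ)+l+2) - x)^2 := by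
  rw [rho_moment k l x]
  have h4 : (0:ℝ) < (k:ℝ)+l+2 := by positivity
  have h5 : (0:ℝ) < (k:ℝ)+l+3 := by positivity
  have heq : ((k:ℝ)+1)*((k:ℝ)+2)/((((k:ℝ)+l+2))*((k:ℝ)+l+3)) - 2*x*((k:ℝ)+1)/((k:ℝ)+l+2) + x^2
      = ((k:ℝ)+1)*((l:ℝ)+1)/(((k:ℝ)+l+2)^2*((k:ℝ)+l+3)) + (((k:ℝ)+1)/((k:ℝ)+l+2) - x)^2 := by
    field_simp
    ring
  rw [heq]
  have : ((k:ℝ)+1)*((l:ℝ)+1)/(((k:ℝ)+l+2)^2*((k:ℝ)+l+3)) ≤ 1/(4*((k:ℝ)+l+3)) := by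
    rw [div_le_div_iff₀ (by positivity) (by positivity)]
    nlinarith [sq_nonneg ((k:ℝ)-(l:ℝ)), h5.le]
  linarith

set_option maxHeartbeats 2000000 in
theorem stmt_8 (f : ℝ → ℝ) (hf : ContinuousOn f (Set.Icc (0:ℝ) 1))
    (p q : ℕ → ℝ → ℕ)
    (hq : ∀ n, ∀ x ∈ Set.Icc (0:ℝ) 1, 0 < q n x)
    (hpq : ∀ n, ∀ x ∈ Set.Icc (0:ℝ) 1, (p n x : ℝ) / (q n x : ℝ) ∈ Set.Icc (0:ℝ) 1)
    (hqinf : ∀ M : ℕ, ∃ N : ℕ, ∀ n ≥ N, ∀ x ∈ Set.Icc (0:ℝ) 1, M ≤ q n x)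
    (hunif : ∀ ε > (0:ℝ), ∃ N : ℕ, ∀ n ≥ N, ∀ x ∈ Set.Icc (0:ℝ) 1,
        |(p n x : ℝ) / (q n x : ℝ) - x| < ε) :
    ∀ ε > (0:ℝ), ∃ N : ℕ, ∀ n ≥ N, ∀ x ∈ Set.Icc (0:ℝ) 1,
      |(∫ s in (0:ℝ)..1, rho (p n x) (q n x - p n x) s * f s) - f x| < ε := by
  obtain ⟨C, hC⟩ := isCompact_Icc.exists_bound_of_continuousOn hf
  have hC0 : 0 ≤ C := le_trans (norm_nonneg (f 0)) (hC 0 (by norm_num))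
  intro ε hε
  have hu := isCompact_Icc.uniformContinuousOn_of_continuous hf
  rw [Metric.uniformContinuousOn_iff] at hu
  obtain ⟨δ, hδ0, hδ⟩ := hu (ε/2) (by linarith)
  set B := 2*C/δ^2 with hBdef
  have hB0 : 0 ≤ B := by positivity
  set t := min 1 (ε/(8*(B+1))) with htdef
  have ht0 : 0 < t := lt_min one_pos (by positivity)
  have ht1 : t ≤ 1 := min_le_left _ _
  have ht2 : t ≤ ε/(8*(B+1)) := min_le_right _ _
  obtain ⟨M, hM⟩ := exists_nat_gt (2/t)
  have hM0 : (0:ℝ) < M := lt_trans (by positivity) hM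
  have h2tM : 2 < (M:ℝ)*t := by
    rw [div_lt_iff₀ ht0] at hM; exact hM
  have h1M : 1/(M:ℝ) < t/2 := by
    rw [div_lt_div_iff₀ hM0 two_pos]; nlinarith
  obtain ⟨N1, hN1⟩ := hqinf M
  obtain ⟨N2, hN2⟩ := hunif (t/2) (by positivity)
  refine ⟨max N1 N2, fun n hn x hx => ?_⟩
  set k := p n x with hk
  set Q := q n x with hQ
  set l := Q - k with hl
  have hQpos : 0 < Q := hq n x hx
  have hQM : M ≤ Q := hN1 n (le_trans (le_max_left _ _) hn) x hx
  have hη : |(k:ℝ)/(Q:ℝ) - x| < t/2 := hN2 n (le_trans (le_max_right _ _) hn) x hx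
  have hQR0 : (0:ℝ) < Q := by exact_mod_cast hQpos
  have hkQ : k ≤ Q := by
    by_contra h'
    push_neg at h'
    have h1 : (Q:ℝ) < (k:ℝ) := by exact_mod_cast h'
    have h2 := (hpq n x hx).2
    rw [div_le_one hQR0] at h2
    linarith
  have hkl : (k:ℝ) + (l:ℝ) = (Q:ℝ) := by
    have : k + l = Q := by omega
    exact_mod_cast this
  have hQMR : (M:ℝ) ≤ (Q:ℝ) := by exact_mod_cast hQM
  -- pointwise modulus bound
  have hpt : ∀ s ∈ Set.Icc (0:ℝ) 1, |f s - f x| ≤ ε/2 + B*(s-x)^2 := by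
    intro s hs
    by_cases hcase : |s - x| < δ
    · have := hδ s hs x hx (by rwa [Real.dist_eq])
      rw [Real.dist_eq] at this
      nlinarith [sq_nonneg (s-x)]
    · push_neg at hcase
      have hδsx : δ^2 ≤ (s-x)^2 := by
        have := abs_nonneg (s-x)
        nlinarith [sq_abs (s-x)]
      have h2C : |f s - f x| ≤ 2*C := by
        have h1 := hC s hs
        have h2 := hC x hx
        rw [Real.norm_eq_abs] at h1 h2
        calc |f s - f x| ≤ |f s| + |f x| := abs_sub _ _
          _ ≤ 2*C := by linarith
      have : 2*C ≤ B*(s-x)^2 := by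
        rw [hBdef]
        rw [div_mul_eq_mul_div, le_div_iff₀ (by positivity)]
        nlinarith
      linarith
  -- integrability facts
  have hIcc : Set.uIcc (0:ℝ) 1 = Set.Icc (0:ℝ) 1 := Set.uIcc_of_le zero_le_one
  have hint_f : IntervalIntegrable (fun s => rho k l s * f s) MeasureTheory.volume 0 1 := by
    apply ContinuousOn.intervalIntegrable
    rw [hIcc]
    exact (rho_cont k l).continuousOn.mul hf
  have hint_fc : IntervalIntegrable (fun s => rho k l s * f x) MeasureTheory.volume 0 1 :=
    Continuous.intervalIntegrable ((rho_cont k l).mul continuous_const) _ _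
  have hint_d : IntervalIntegrable (fun s => rho k l s * (f s - f x)) MeasureTheory.volume 0 1 := by
    apply ContinuousOn.intervalIntegrable
    rw [hIcc]
    exact (rho_cont k l).continuousOn.mul (hf.sub continuousOn_const)
  have hint_g : IntervalIntegrable (fun s => rho k l s * |f s - f x|) MeasureTheory.volume 0 1 := by
    apply ContinuousOn.intervalIntegrable
    rw [hIcc]
    exact (rho_cont k l).continuousOn.mul ((hf.sub continuousOn_const).abs)
  have hcont2 : Continuous (fun s : ℝ => rho k l s * (s-x)^2) :=
    (rho_cont k l).mul ((continuous_id.sub continuous_const).pow 2)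
  have hint_h : IntervalIntegrable (fun s => rho k l s * (ε/2 + B*(s-x)^2))
      MeasureTheory.volume 0 1 :=
    Continuous.intervalIntegrable ((rho_cont k l).mul (continuous_const.add
      (continuous_const.mul ((continuous_id.sub continuous_const).pow 2)))) _ _
  -- step 1
  have step1 : (∫ s in (0:ℝ)..1, rho k l s * f s) - f x
      = ∫ s in (0:ℝ)..1, rho k l s * (f s - f x) := by
    have hfun : (fun s => rho k l s * (f s - f x))
        = fun s => rho k l s * f s - rho k l s * f x := funext fun s => by ring
    rw [hfun, intervalIntegral.integral_sub hint_f hint_fc,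
      intervalIntegral.integral_mul_const, rho_int_one]
    ring
  -- step 2
  have step2 : |∫ s in (0:ℝ)..1, rho k l s * (f s - f x)|
      ≤ ∫ s in (0:ℝ)..1, rho k l s * |f s - f x| := by
    calc |∫ s in (0:ℝ)..1, rho k l s * (f s - f x)|
        ≤ ∫ s in (0:ℝ)..1, |rho k l s * (f s - f x)| :=
          intervalIntegral.abs_integral_le_integral_abs zero_le_one
      _ = ∫ s in (0:ℝ)..1, rho k l s * |f s - f x| := by
          apply intervalIntegral.integral_congr
          intro s hs
          rw [hIcc] at hs
          show |rho k l s * (f s - f x)| = rho k l s * |f s - f x|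
          rw [abs_mul, abs_of_nonneg (rho_nonneg k l hs)]
  -- step 3
  have step3 : (∫ s in (0:ℝ)..1, rho k l s * |f s - f x|)
      ≤ ∫ s in (0:ℝ)..1, rho k l s * (ε/2 + B*(s-x)^2) := by
    apply intervalIntegral.integral_mono_on zero_le_one hint_g hint_h
    intro s hs
    exact mul_le_mul_of_nonneg_left (hpt s hs) (rho_nonneg k l hs)
  -- step 4
  have step4 : (∫ s in (0:ℝ)..1, rho k l s * (ε/2 + B*(s-x)^2))
      = ε/2 + B * ∫ s in (0:ℝ)..1, rho k l s * (s-x)^2 := by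
    have hfun : (fun s => rho k l s * (ε/2 + B*(s-x)^2))
        = fun s => (ε/2) * rho k l s + B * (rho k l s * (s-x)^2) := funext fun s => by ring
    rw [hfun, intervalIntegral.integral_add (f := fun s => (ε/2) * rho k l s)
      (g := fun s => B * (rho k l s * (s-x)^2))
      ((Continuous.intervalIntegrable (continuous_const.mul (rho_cont k l)) _ _))
      ((Continuous.intervalIntegrable (continuous_const.mul hcont2) _ _)),
      intervalIntegral.integral_const_mul, intervalIntegral.integral_const_mul, rho_int_one]
    ring
  -- step 5 : bound the second moment
  have step5 : (∫ s in (0:ℝ)..1, rho k l s * (s-x)^2) ≤ 2*t := by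
    have h := rho_sq_le k l x
    rw [show ((k:ℝ)+l+3) = (Q:ℝ)+3 by linarith, show ((k:ℝ)+l+2) = (Q:ℝ)+2 by linarith] at h
    have hQinv : 1/((Q:ℝ)+2) < t/2 := by
      have : 1/((Q:ℝ)+2) ≤ 1/(M:ℝ) :=
        one_div_le_one_div_of_le hM0 (by linarith)
      linarith
    have bound_a : 1/(4*((Q:ℝ)+3)) ≤ t := by
      have h1 : 1/(4*((Q:ℝ)+3)) ≤ 1/((Q:ℝ)+2) :=
        one_div_le_one_div_of_le (by linarith) (by linarith)
      linarith
    have bound_b : (((k:ℝ)+1)/((Q:ℝ)+2) - x)^2 ≤ t := by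
      have hmean : ((k:ℝ)+1)/((Q:ℝ)+2) - (k:ℝ)/(Q:ℝ)
          = ((Q:ℝ)-2*(k:ℝ))/((Q:ℝ)*((Q:ℝ)+2)) := by
        field_simp
        ring
      have hk0 : (0:ℝ) ≤ (k:ℝ) := Nat.cast_nonneg k
      have hkQR : (k:ℝ) ≤ (Q:ℝ) := by exact_mod_cast hkQ
      have habs : |((k:ℝ)+1)/((Q:ℝ)+2) - (k:ℝ)/(Q:ℝ)| ≤ 1/((Q:ℝ)+2) := by
        rw [hmean, abs_div, abs_of_pos (by positivity : (0:ℝ) < (Q:ℝ)*((Q:ℝ)+2))]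
        rw [div_le_div_iff₀ (by positivity) (by positivity)]
        have : |(Q:ℝ)-2*(k:ℝ)| ≤ (Q:ℝ) := abs_le.2 ⟨by linarith, by linarith⟩
        nlinarith [abs_nonneg ((Q:ℝ)-2*(k:ℝ))]
      have htot : |((k:ℝ)+1)/((Q:ℝ)+2) - x| ≤ t := by
        calc |((k:ℝ)+1)/((Q:ℝ)+2) - x|
            ≤ |((k:ℝ)+1)/((Q:ℝ)+2) - (k:ℝ)/(Q:ℝ)| + |(k:ℝ)/(Q:ℝ) - x| := by
              have := abs_sub_le (((k:ℝ)+1)/((Q:ℝ)+2)) ((k:ℝ)/(Q:ℝ)) x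
              linarith
          _ ≤ t := by linarith
      calc (((k:ℝ)+1)/((Q:ℝ)+2) - x)^2 = |((k:ℝ)+1)/((Q:ℝ)+2) - x|^2 := (sq_abs _).symm
        _ ≤ t^2 := by
            apply pow_le_pow_left₀ (abs_nonneg _) htot
        _ ≤ t := by nlinarith
    linarith
  -- conclusion
  have hBt : B * (2*t) ≤ ε/4 := by
    have h1 : B * (2*t) ≤ (B+1) * (2*t) := by nlinarith
    have h2 : (B+1) * (2*t) ≤ (B+1) * (2*(ε/(8*(B+1)))) := by nlinarith
    have h3 : (B+1) * (2*(ε/(8*(B+1)))) = ε/4 := by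
      field_simp
      ring
    linarith
  calc |(∫ s in (0:ℝ)..1, rho k l s * f s) - f x|
      = |∫ s in (0:ℝ)..1, rho k l s * (f s - f x)| := by rw [step1]
    _ ≤ ∫ s in (0:ℝ)..1, rho k l s * |f s - f x| := step2
    _ ≤ ∫ s in (0:ℝ)..1, rho k l s * (ε/2 + B*(s-x)^2) := step3
    _ = ε/2 + B * ∫ s in (0:ℝ)..1, rho k l s * (s-x)^2 := step4
    _ ≤ ε/2 + B * (2*t) := by have := mul_le_mul_of_nonneg_left step5 hB0; linarith
    _ ≤ ε/2 + ε/4 := by linarith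
    _ < ε := by linarith
end

section
/- Let γ: [0,1] → ℝ² be the C¹ curve γ(x) = (C·x, y(x)) with C > 0, let x ∈ [0,1], and let (pₙ, qₙ) ∈ ℕ × ℕ* satisfy pₙ/qₙ ∈ [0,1], pₙ/qₙ → x and qₙ → ∞. Then y'(x) = limₙ (qₙ+1)! · S_{pₙ, qₙ−pₙ} / C^{qₙ}, where S_{k,l} is the signature coefficient of γ on e₁^⊗k ⊗ e₂ ⊗ e₁^⊗l. -/
open intervalIntegral

lemma contSB (u v : ℕ) : Continuous fun s : ℝ => s ^ u * (1 - s) ^ v := by fun_prop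

lemma intSB (u v : ℕ) : IntervalIntegrable (fun s : ℝ => s ^ u * (1 - s) ^ v)
    MeasureTheory.volume 0 1 := (contSB u v).intervalIntegrable 0 1

lemma Ibeta : ∀ (b a : ℕ), ∫ s in (0:ℝ)..1, s ^ a * (1 - s) ^ b
    = (a.factorial * b.factorial : ℝ) / ((a + b + 1).factorial) := by
  intro b
  induction b with
  | zero =>
    intro a
    simp only [pow_zero, mul_one, integral_pow, Nat.factorial_zero, Nat.cast_one, Nat.add_zero]
    rw [Nat.factorial_succ]
    push_cast
    have h1 : ((a:ℝ) + 1) ≠ 0 := by positivity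
    have h2 : (a.factorial : ℝ) ≠ 0 := by exact_mod_cast a.factorial_pos.ne'
    field_simp
    simp
  | succ b ih =>
    intro a
    have hder : ∀ s ∈ Set.uIcc (0:ℝ) 1, HasDerivAt (fun s : ℝ => s ^ (a+1) * (1-s) ^ (b+1))
        (((a:ℝ)+1) * (s ^ a * (1-s)^(b+1)) - ((b:ℝ)+1) * (s^(a+1) * (1-s)^b)) s := by
      intro s _
      have h1 : HasDerivAt (fun s : ℝ => 1 - s) (-1) s := (hasDerivAt_id s).const_sub 1
      have h2 := h1.fun_pow (b+1)
      have h3 := hasDerivAt_pow (a+1) s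
      refine (h3.fun_mul h2).congr_deriv ?_
      push_cast
      ring
    have hint : IntervalIntegrable (fun s : ℝ => ((a:ℝ)+1) * (s ^ a * (1-s)^(b+1))
        - ((b:ℝ)+1) * (s^(a+1) * (1-s)^b)) MeasureTheory.volume 0 1 :=
      (((intSB a (b+1)).const_mul _).sub ((intSB (a+1) b).const_mul _))
    have key := integral_eq_sub_of_hasDerivAt hder hint
    rw [integral_sub ((intSB a (b+1)).const_mul _) ((intSB (a+1) b).const_mul _),
      integral_const_mul, integral_const_mul, ih (a+1)] at key
    have key2 : ((a:ℝ)+1) * (∫ s in (0:ℝ)..1, s ^ a * (1 - s) ^ (b+1))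
        = ((b:ℝ)+1) * (((a+1).factorial : ℝ) * (b.factorial) / ((a + 1 + b + 1).factorial)) := by
      have h0 : ((1:ℝ))^(a+1) * (1-1)^(b+1) - 0^(a+1)*(1-0)^(b+1) = 0 := by
        simp
      rw [h0] at key
      linarith [key]
    have h1 : ((a:ℝ) + 1) ≠ 0 := by positivity
    have e1 : a + 1 + b + 1 = a + (b + 1) + 1 := by omega
    rw [e1] at key2
    have hfab : ((a + (b+1) + 1).factorial : ℝ) ≠ 0 := by
      exact_mod_cast (a + (b+1) + 1).factorial_pos.ne'
    have hfa1 : ((a+1).factorial : ℝ) = ((a:ℝ)+1) * a.factorial := by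
      rw [Nat.factorial_succ]; push_cast; ring
    have hfb1 : ((b+1).factorial : ℝ) = ((b:ℝ)+1) * b.factorial := by
      rw [Nat.factorial_succ]; push_cast; ring
    rw [hfa1] at key2
    rw [eq_div_iff hfab, hfb1]
    have := key2
    field_simp at this
    apply mul_left_cancel₀ h1
    linear_combination ((a:ℝ) + 1) * this

lemma kernel_bound (f g : ℝ → ℝ) (hf : ContinuousOn f (Set.Icc (0:ℝ) 1))
    (hg : Continuous g) (hgpos : ∀ s ∈ Set.Icc (0:ℝ) 1, 0 ≤ g s)
    (hg1 : (∫ s in (0:ℝ)..1, g s) = 1)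
    (x a c : ℝ) (hpt : ∀ s ∈ Set.Icc (0:ℝ) 1, |f s - f x| ≤ a + c * (s - x) ^ 2) :
    |(∫ s in (0:ℝ)..1, g s * f s) - f x| ≤ a + c * ∫ s in (0:ℝ)..1, g s * (s - x) ^ 2 := by
  have huIcc : Set.uIcc (0:ℝ) 1 = Set.Icc 0 1 := Set.uIcc_of_le zero_le_one
  have hco : ContinuousOn (fun s => g s * f s) (Set.uIcc (0:ℝ) 1) := by
    rw [huIcc]; exact hg.continuousOn.mul hf
  have hfi : IntervalIntegrable (fun s => g s * f s) MeasureTheory.volume 0 1 :=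
    hco.intervalIntegrable
  have hgi := hg.intervalIntegrable (μ := MeasureTheory.volume) 0 1
  have hdi : IntervalIntegrable (fun s => g s * (f s - f x)) MeasureTheory.volume 0 1 := by
    simp only [mul_sub]
    exact hfi.sub (hgi.mul_const _)
  have hbi : IntervalIntegrable (fun s => g s * (a + c * (s - x) ^ 2))
      MeasureTheory.volume 0 1 := (hg.mul (by fun_prop)).intervalIntegrable 0 1
  have step1 : (∫ s in (0:ℝ)..1, g s * f s) - f x = ∫ s in (0:ℝ)..1, g s * (f s - f x) := by
    simp only [mul_sub]
    rw [integral_sub hfi (hgi.mul_const _), integral_mul_const, hg1, one_mul]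
  have step4 : ∫ s in (0:ℝ)..1, g s * (a + c * (s - x) ^ 2)
      = a + c * ∫ s in (0:ℝ)..1, g s * (s - x) ^ 2 := by
    have h : (fun s : ℝ => g s * (a + c * (s - x) ^ 2))
        = fun s => a * g s + c * (g s * (s - x) ^ 2) := by funext s; ring
    rw [h, integral_add (hgi.const_mul a)
        (((hg.fun_mul (by fun_prop : Continuous fun s : ℝ => (s - x) ^ 2)).intervalIntegrable 0 1).const_mul c),
      integral_const_mul, integral_const_mul, hg1, mul_one]
  rw [step1, ← step4]
  calc |∫ s in (0:ℝ)..1, g s * (f s - f x)|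
      ≤ ∫ s in (0:ℝ)..1, |g s * (f s - f x)| :=
        abs_integral_le_integral_abs zero_le_one
    _ ≤ ∫ s in (0:ℝ)..1, g s * (a + c * (s - x) ^ 2) := by
        apply integral_mono_on zero_le_one hdi.abs hbi
        intro s hs
        rw [abs_mul, abs_of_nonneg (hgpos s hs)]
        exact mul_le_mul_of_nonneg_left (hpt s hs) (hgpos s hs)

lemma mom0 (P Q : ℕ) (hPQ : P ≤ Q) :
    ∫ s in (0:ℝ)..1, (((Q+1).factorial : ℝ) / ((P.factorial : ℝ) * ((Q - P).factorial : ℝ)))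
      * (s ^ P * (1 - s) ^ (Q - P)) = 1 := by
  rw [integral_const_mul, Ibeta, show P + (Q - P) + 1 = Q + 1 from by omega]
  have h1 : (P.factorial : ℝ) ≠ 0 := by exact_mod_cast P.factorial_pos.ne'
  have h2 : ((Q - P).factorial : ℝ) ≠ 0 := by exact_mod_cast (Q - P).factorial_pos.ne'
  have h3 : ((Q + 1).factorial : ℝ) ≠ 0 := by exact_mod_cast (Q + 1).factorial_pos.ne'
  field_simp

lemma momV (P Q : ℕ) (hPQ : P ≤ Q) (x : ℝ) :
    ∫ s in (0:ℝ)..1, (((Q+1).factorial : ℝ) / ((P.factorial : ℝ) * ((Q - P).factorial : ℝ)))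
      * (s ^ P * (1 - s) ^ (Q - P)) * (s - x) ^ 2
      = ((P:ℝ)+1)*((P:ℝ)+2)/(((Q:ℝ)+2)*((Q:ℝ)+3)) - 2*x*(((P:ℝ)+1)/((Q:ℝ)+2)) + x^2 := by
  set N : ℝ := ((Q+1).factorial : ℝ) / ((P.factorial : ℝ) * ((Q - P).factorial : ℝ)) with hN
  set B := Q - P with hB
  have h : (fun s : ℝ => N * (s ^ P * (1 - s) ^ B) * (s - x) ^ 2)
      = fun s => N * (s ^ (P+2) * (1 - s) ^ B) - (2*x*N) * (s ^ (P+1) * (1 - s) ^ B)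
        + (x^2*N) * (s ^ P * (1 - s) ^ B) := by funext s; ring
  rw [h, integral_add (((intSB (P+2) B).const_mul N).sub ((intSB (P+1) B).const_mul _))
      ((intSB P B).const_mul _),
    integral_sub ((intSB (P+2) B).const_mul N) ((intSB (P+1) B).const_mul _),
    integral_const_mul, integral_const_mul, integral_const_mul, Ibeta, Ibeta, Ibeta,
    show P + 2 + B + 1 = Q + 3 from by omega, show P + 1 + B + 1 = Q + 2 from by omega,
    show P + B + 1 = Q + 1 from by omega]
  have h1 : (P.factorial : ℝ) ≠ 0 := by exact_mod_cast P.factorial_pos.ne'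
  have h2 : (B.factorial : ℝ) ≠ 0 := by exact_mod_cast B.factorial_pos.ne'
  have h3 : ((Q + 1).factorial : ℝ) ≠ 0 := by exact_mod_cast (Q + 1).factorial_pos.ne'
  have e1 : ((Q + 3).factorial : ℝ) = ((Q:ℝ)+3) * (((Q:ℝ)+2) * ((Q+1).factorial : ℝ)) := by
    rw [show Q + 3 = (Q+2) + 1 from rfl, Nat.factorial_succ, show Q + 2 = (Q+1) + 1 from rfl,
      Nat.factorial_succ]
    push_cast; ring
  have e2 : ((Q + 2).factorial : ℝ) = ((Q:ℝ)+2) * ((Q+1).factorial : ℝ) := by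
    rw [show Q + 2 = (Q+1) + 1 from rfl, Nat.factorial_succ]; push_cast; ring
  have e3 : ((P + 2).factorial : ℝ) = ((P:ℝ)+2) * (((P:ℝ)+1) * (P.factorial : ℝ)) := by
    rw [show P + 2 = (P+1) + 1 from rfl, Nat.factorial_succ, Nat.factorial_succ]
    push_cast; ring
  have e4 : ((P + 1).factorial : ℝ) = ((P:ℝ)+1) * (P.factorial : ℝ) := by
    rw [Nat.factorial_succ]; push_cast; ring
  have hq2 : ((Q:ℝ)+2) ≠ 0 := by positivity
  have hq3 : ((Q:ℝ)+3) ≠ 0 := by positivity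
  have t1 : N * (((P+2).factorial : ℝ) * (B.factorial : ℝ) / ((Q+3).factorial : ℝ))
      = ((P:ℝ)+1)*((P:ℝ)+2)/(((Q:ℝ)+2)*((Q:ℝ)+3)) := by
    rw [hN, e1, e3]; field_simp
  have t2 : N * (((P+1).factorial : ℝ) * (B.factorial : ℝ) / ((Q+2).factorial : ℝ))
      = ((P:ℝ)+1)/((Q:ℝ)+2) := by
    rw [hN, e2, e4]; field_simp
  have t3 : N * ((P.factorial : ℝ) * (B.factorial : ℝ) / ((Q+1).factorial : ℝ)) = 1 := by
    rw [hN]; field_simp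
  linear_combination t1 - (2*x)*t2 + (x^2)*t3

theorem stmt_10 (C : ℝ) (hC : 0 < C) (y y' : ℝ → ℝ)
    (hy : ∀ s ∈ Set.Icc (0:ℝ) 1, HasDerivAt y (y' s) s)
    (hy' : ContinuousOn y' (Set.Icc (0:ℝ) 1))
    (S : ℕ → ℕ → ℝ)
    (hS : ∀ k l, S k l = C ^ (k + l) *
      ∫ s in (0:ℝ)..1, s ^ k * (1 - s) ^ l / (k.factorial * l.factorial) * y' s)
    (x : ℝ) (hx : x ∈ Set.Icc (0:ℝ) 1)
    (p q : ℕ → ℕ) (hq : ∀ n, 0 < q n)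
    (hpq : ∀ n, (p n : ℝ) / (q n : ℝ) ∈ Set.Icc (0:ℝ) 1)
    (hqt : Filter.Tendsto q Filter.atTop Filter.atTop)
    (hxa : Filter.Tendsto (fun n => (p n : ℝ) / (q n : ℝ)) Filter.atTop (nhds x)) :
    Filter.Tendsto (fun n => ((q n + 1).factorial : ℝ) * S (p n) (q n - p n) / C ^ (q n))
      Filter.atTop (nhds (y' x)) := by
  have hq0 : ∀ n, ((q n : ℝ)) ≠ 0 := fun n => by
    exact_mod_cast (hq n).ne'
  have hple : ∀ n, p n ≤ q n := by
    intro n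
    have h := (hpq n).2
    have hq0' : (0:ℝ) < q n := by exact_mod_cast hq n
    exact_mod_cast (div_le_one hq0').mp h
  -- kernel
  set g : ℕ → ℝ → ℝ := fun n s =>
    (((q n + 1).factorial : ℝ) / (((p n).factorial : ℝ) * ((q n - p n).factorial : ℝ)))
      * (s ^ (p n) * (1 - s) ^ (q n - p n)) with hg
  have hgc : ∀ n, Continuous (g n) := fun n => continuous_const.mul (contSB _ _)
  have hgpos : ∀ n, ∀ s ∈ Set.Icc (0:ℝ) 1, 0 ≤ g n s := by
    intro n s hs
    apply mul_nonneg
    · positivity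
    · exact mul_nonneg (pow_nonneg hs.1 _) (pow_nonneg (by linarith [hs.2]) _)
  have hEq : ∀ n, ((q n + 1).factorial : ℝ) * S (p n) (q n - p n) / C ^ (q n)
      = ∫ s in (0:ℝ)..1, g n s * y' s := by
    intro n
    rw [hS, show p n + (q n - p n) = q n from Nat.add_sub_cancel' (hple n)]
    have hC0 : C ^ (q n) ≠ 0 := (pow_pos hC _).ne'
    rw [show ∀ A B : ℝ, A * (C ^ (q n) * B) / C ^ (q n) = A * B from fun A B => by
      field_simp]
    rw [← integral_const_mul]
    congr 1
    funext s
    rw [hg]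
    push_cast
    ring
  -- limits
  have htq : Filter.Tendsto (fun n => ((q n : ℝ))) Filter.atTop Filter.atTop :=
    tendsto_natCast_atTop_atTop.comp hqt
  have htinv : Filter.Tendsto (fun n => ((q n : ℝ))⁻¹) Filter.atTop (nhds 0) :=
    htq.inv_tendsto_atTop
  have hA : Filter.Tendsto (fun n => ((p n : ℝ)+1)/((q n : ℝ)+2)) Filter.atTop (nhds x) := by
    have heq : ∀ n, ((p n : ℝ)+1)/((q n : ℝ)+2)
        = (((p n : ℝ)/(q n : ℝ)) + ((q n : ℝ))⁻¹)/(1 + 2*((q n : ℝ))⁻¹) := by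
      intro n
      have := hq0 n
      field_simp
    simp only [heq]
    have := (hxa.add htinv).div ((htinv.const_mul 2).const_add 1)
      (by norm_num : (1:ℝ) + 2*0 ≠ 0)
    simp only [mul_zero, add_zero, div_one] at this; exact this
  have hB : Filter.Tendsto
      (fun n => ((p n : ℝ)+1)*((p n : ℝ)+2)/(((q n : ℝ)+2)*((q n : ℝ)+3)))
      Filter.atTop (nhds (x^2)) := by
    have heq : ∀ n, ((p n : ℝ)+1)*((p n : ℝ)+2)/(((q n : ℝ)+2)*((q n : ℝ)+3))
        = ((((p n : ℝ)/(q n : ℝ)) + ((q n : ℝ))⁻¹) * (((p n : ℝ)/(q n : ℝ)) + 2*((q n : ℝ))⁻¹))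
          /((1 + 2*((q n : ℝ))⁻¹)*(1 + 3*((q n : ℝ))⁻¹)) := by
      intro n
      have := hq0 n
      field_simp
    simp only [heq]
    have := ((hxa.add htinv).mul (hxa.add (htinv.const_mul 2))).div
      (((htinv.const_mul 2).const_add 1).mul ((htinv.const_mul 3).const_add 1))
      (by norm_num : ((1:ℝ) + 2*0)*(1+3*0) ≠ 0)
    have h2 : (x + 0) * (x + 2*0) / ((1+2*0)*(1+3*0)) = x^2 := by norm_num; ring
    rw [h2] at this
    exact this
  have hW : Filter.Tendsto (fun n =>
      ((p n : ℝ)+1)*((p n : ℝ)+2)/(((q n : ℝ)+2)*((q n : ℝ)+3))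
        - 2*x*(((p n : ℝ)+1)/((q n : ℝ)+2)) + x^2)
      Filter.atTop (nhds 0) := by
    have := (hB.sub (hA.const_mul (2*x))).add
      (tendsto_const_nhds : Filter.Tendsto (fun _ : ℕ => x^2) Filter.atTop (nhds (x^2)))
    have h2 : x^2 - 2*x*x + x^2 = 0 := by ring
    rw [h2] at this
    exact this
  -- bounds on y'
  obtain ⟨M, hM⟩ := isCompact_Icc.exists_bound_of_continuousOn hy'
  have hM0 : 0 ≤ M := (norm_nonneg (y' x)).trans (hM x hx)
  -- main estimate
  rw [Metric.tendsto_nhds]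
  intro ε hε
  have hcx := hy' x hx
  rw [Metric.continuousWithinAt_iff] at hcx
  obtain ⟨δ, hδ0, hδ⟩ := hcx (ε/4) (by positivity)
  set c : ℝ := 2*M/δ^2 with hc
  have hc0 : 0 ≤ c := by positivity
  have hpt : ∀ s ∈ Set.Icc (0:ℝ) 1, |y' s - y' x| ≤ ε/4 + c * (s - x)^2 := by
    intro s hs
    by_cases h : dist s x < δ
    · have h1 := hδ hs h
      rw [Real.dist_eq] at h1
      have h2 : 0 ≤ c * (s - x)^2 := mul_nonneg hc0 (sq_nonneg _)
      linarith
    · push_neg at h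
      rw [Real.dist_eq] at h
      have h2 : δ^2 ≤ (s - x)^2 := by
        rw [← sq_abs (s - x)]
        exact pow_le_pow_left₀ hδ0.le h 2
      have h3 : 2*M ≤ c * (s - x)^2 := by
        have h4 : c * δ^2 ≤ c * (s - x)^2 := mul_le_mul_of_nonneg_left h2 hc0
        have h5 : c * δ^2 = 2*M := by
          rw [hc]; field_simp
        linarith
      have h6 : |y' s - y' x| ≤ 2*M := by
        have := hM s hs
        have := hM x hx
        rw [Real.norm_eq_abs] at *
        calc |y' s - y' x| ≤ |y' s| + |y' x| := abs_sub _ _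
          _ ≤ 2*M := by linarith
      linarith
  have hWc := hW.const_mul c
  rw [mul_zero] at hWc
  have hev := Metric.tendsto_nhds.1 hWc (ε/4) (by positivity)
  filter_upwards [hev] with n hn
  rw [Real.dist_eq, sub_zero] at hn
  rw [Real.dist_eq, hEq n]
  have hkb := kernel_bound y' (g n) hy' (hgc n) (hgpos n)
    (mom0 (p n) (q n) (hple n)) x (ε/4) c hpt
  simp only [hg] at hkb
  rw [momV (p n) (q n) (hple n) x] at hkb
  have hle : c * (((p n : ℝ)+1)*((p n : ℝ)+2)/(((q n : ℝ)+2)*((q n : ℝ)+3))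
      - 2*x*(((p n : ℝ)+1)/((q n : ℝ)+2)) + x^2)
      ≤ |c * (((p n : ℝ)+1)*((p n : ℝ)+2)/(((q n : ℝ)+2)*((q n : ℝ)+3))
      - 2*x*(((p n : ℝ)+1)/((q n : ℝ)+2)) + x^2)| := le_abs_self _
  calc |(∫ s in (0:ℝ)..1, g n s * y' s) - y' x|
      ≤ ε/4 + c * (((p n : ℝ)+1)*((p n : ℝ)+2)/(((q n : ℝ)+2)*((q n : ℝ)+3))
        - 2*x*(((p n : ℝ)+1)/((q n : ℝ)+2)) + x^2) := by
        simpa only [hg] using hkb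
    _ < ε := by linarith
end

section
/- Asymptotic supremum semi-norm recovery: let γ̂ ∈ C¹([0,1], ℝ^{d-1}) and let γ(s) = (s, γ̂(s)) be its time-augmented curve in ℝ^d (adding the linear coordinate s in position i = 1). Define, for each k, l ∈ ℕ, the vector L_{k,l}(S(γ)) ∈ ℝ^{d-1} whose j-th component is the signature coefficient of γ on e₁^⊗k ⊗ e_{j+1} ⊗ e₁^⊗l. Then limsup_{n→∞} (n+1)! · max_{k+l=n} |L_{k,l}(S(γ))| = ‖γ̂'‖_∞ = sup_{s∈[0,1]} |γ̂'(s)|. -/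
set_option maxHeartbeats 1000000

open intervalIntegral Filter MeasureTheory

private lemma cont_ii' (f : ℝ → ℝ) (hf : Continuous f) :
    IntervalIntegrable f MeasureTheory.volume 0 1 := hf.intervalIntegrable 0 1

private lemma beta_nat' (k l : ℕ) :
    ∫ s in (0:ℝ)..1, s ^ k * (1 - s) ^ l
      = (k.factorial * l.factorial : ℝ) / (k + l + 1).factorial := by
  induction l generalizing k with
  | zero =>
    simp only [pow_zero, mul_one, integral_pow, Nat.add_zero, Nat.factorial_succ]
    have : (k.factorial : ℝ) ≠ 0 := by positivity
    push_cast
    field_simp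
    simp
  | succ l ih =>
    have hu : ∀ x ∈ Set.uIcc (0:ℝ) 1,
        HasDerivAt (fun s : ℝ => (1 - s) ^ (l + 1))
          (-((l+1 : ℝ) * (1 - x) ^ l)) x := by
      intro x _
      have h1 : HasDerivAt (fun s : ℝ => 1 - s) (-1) x := by
        simpa using (hasDerivAt_id x).const_sub 1
      have := h1.fun_pow (l+1)
      simpa [mul_comm, mul_assoc, mul_left_comm] using this
    have hv : ∀ x ∈ Set.uIcc (0:ℝ) 1,
        HasDerivAt (fun s : ℝ => s ^ (k + 1)) ((k+1 : ℝ) * x ^ k) x := by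
      intro x _
      simpa using (hasDerivAt_pow (k+1) x)
    have parts := integral_mul_deriv_eq_deriv_mul hu hv
      (cont_ii' _ (by fun_prop)) (cont_ii' _ (by fun_prop))
    have e1 : (∫ x in (0:ℝ)..1, (1-x)^(l+1) * ((k+1:ℝ) * x^k))
        = (k+1:ℝ) * ∫ x in (0:ℝ)..1, x^k*(1-x)^(l+1) := by
      rw [← intervalIntegral.integral_const_mul]; apply integral_congr; intro x _; ring
    have e2 : (∫ x in (0:ℝ)..1, (-((l+1:ℝ)*(1-x)^l)) * x^(k+1))
        = -((l+1:ℝ) * ∫ x in (0:ℝ)..1, x^(k+1)*(1-x)^l) := by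
      rw [← intervalIntegral.integral_const_mul, ← intervalIntegral.integral_neg]; apply integral_congr; intro x _; ring
    rw [e1, e2] at parts
    simp only [one_pow, sub_self, zero_pow (Nat.succ_ne_zero l), mul_zero, zero_mul,
      zero_pow (Nat.succ_ne_zero k), sub_neg_eq_add, zero_sub, neg_add_eq_sub, zero_add] at parts
    have hI : ∫ s in (0:ℝ)..1, s ^ k * (1 - s) ^ (l+1)
        = ((l:ℝ)+1) * (∫ x in (0:ℝ)..1, x^(k+1)*(1-x)^l) / ((k:ℝ)+1) := by
      have hk : ((k:ℝ)+1) ≠ 0 := by positivity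
      field_simp
      linarith [parts]
    rw [hI, ih (k+1)]
    have hidx : (k+1) + l + 1 = k + (l+1) + 1 := by omega
    rw [hidx]
    have h1 : ((k+1).factorial : ℝ) = (k+1) * k.factorial := by
      rw [Nat.factorial_succ]; push_cast; ring
    have h2 : ((l+1).factorial : ℝ) = (l+1) * l.factorial := by
      rw [Nat.factorial_succ]; push_cast; ring
    rw [h1, h2]
    have hk : ((k:ℝ)+1) ≠ 0 := by positivity
    have hf : ((k + (l+1) + 1).factorial : ℝ) ≠ 0 := by positivity
    field_simp

theorem stmt_17 (m : ℕ) (γ γ' : ℝ → EuclideanSpace ℝ (Fin m))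
    (hγ : ∀ s ∈ Set.Icc (0:ℝ) 1, HasDerivAt γ (γ' s) s)
    (hγ' : ContinuousOn γ' (Set.Icc (0:ℝ) 1))
    (L : ℕ → ℕ → EuclideanSpace ℝ (Fin m))
    (hL : ∀ k l : ℕ, ∀ j : Fin m,
      L k l j = ∫ s in (0:ℝ)..1, s ^ k * (1 - s) ^ l / (k.factorial * l.factorial) * γ' s j) :
    Filter.limsup (fun n : ℕ => ((n + 1).factorial : ℝ) *
        (Finset.range (n + 1)).sup' ⟨0, Finset.mem_range.mpr (Nat.succ_pos n)⟩ (fun k => ‖L k (n - k)‖))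
      Filter.atTop = ⨆ s : Set.Icc (0:ℝ) 1, ‖γ' s.val‖ := by
  have huIcc : Set.uIcc (0:ℝ) 1 = Set.Icc 0 1 := Set.uIcc_of_le zero_le_one
  -- vector form of L
  have hInt : ∀ k l : ℕ, IntervalIntegrable
      (fun s : ℝ => (s ^ k * (1 - s) ^ l / (k.factorial * l.factorial : ℝ)) • γ' s)
      volume 0 1 := by
    intro k l
    apply ContinuousOn.intervalIntegrable
    rw [huIcc]
    exact (((continuous_pow k).continuousOn.mul
      ((continuous_const.sub continuous_id).pow l).continuousOn).div_const _).smul hγ'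
  have hLvec : ∀ k l : ℕ, L k l
      = ∫ s in (0:ℝ)..1, (s ^ k * (1 - s) ^ l / (k.factorial * l.factorial : ℝ)) • γ' s := by
    intro k l
    ext j
    rw [hL k l j]
    have := (EuclideanSpace.proj (𝕜 := ℝ) j).intervalIntegral_comp_comm (hInt k l)
    simp only [EuclideanSpace.proj, PiLp.proj_apply, PiLp.smul_apply, smul_eq_mul] at this
    rw [← this]
  -- maximizer
  obtain ⟨s₀, hs₀mem, hs₀max⟩ := isCompact_Icc.exists_isMaxOn (α := ℝ)
    ⟨0, by norm_num⟩ hγ'.norm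
  set M : ℝ := ‖γ' s₀‖ with hM
  have hM0 : 0 ≤ M := norm_nonneg _
  have hmax : ∀ s ∈ Set.Icc (0:ℝ) 1, ‖γ' s‖ ≤ M := fun s hs => hs₀max hs
  have hsup : (⨆ s : Set.Icc (0:ℝ) 1, ‖γ' s.val‖) = M := by
    apply le_antisymm
    · exact ciSup_le fun s => hmax s.val s.2
    · exact le_ciSup ⟨M, by rintro _ ⟨s, rfl⟩; exact hmax s.val s.2⟩
        (⟨s₀, hs₀mem⟩ : Set.Icc (0:ℝ) 1)
  set a : ℕ → ℝ := fun n => ((n + 1).factorial : ℝ) *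
      (Finset.range (n + 1)).sup' ⟨0, Finset.mem_range.mpr (Nat.succ_pos n)⟩ (fun k => ‖L k (n - k)‖) with ha
  -- upper bound on individual coefficients
  have upper : ∀ n : ℕ, ∀ k, k ≤ n → ‖L k (n - k)‖ ≤ M / ((n+1).factorial : ℝ) := by
    intro n k hk
    set l := n - k with hl
    have hkl : k + l = n := by omega
    have hnorm : ‖L k l‖ ≤ ∫ s in (0:ℝ)..1,
        ‖(s ^ k * (1 - s) ^ l / (k.factorial * l.factorial : ℝ)) • γ' s‖ := by
      rw [hLvec k l]
      exact norm_integral_le_integral_norm zero_le_one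
    have hmono : (∫ s in (0:ℝ)..1,
        ‖(s ^ k * (1 - s) ^ l / (k.factorial * l.factorial : ℝ)) • γ' s‖)
        ≤ ∫ s in (0:ℝ)..1, (s ^ k * (1 - s) ^ l / (k.factorial * l.factorial : ℝ)) * M := by
      apply integral_mono_on zero_le_one
      · apply ContinuousOn.intervalIntegrable
        rw [huIcc]
        exact ((((continuous_pow k).continuousOn.mul
          ((continuous_const.sub continuous_id).pow l).continuousOn).div_const _).smul hγ').norm
      · exact cont_ii' _ (by fun_prop)
      · intro s hs
        have hc : 0 ≤ s ^ k * (1 - s) ^ l / (k.factorial * l.factorial : ℝ) := by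
          have h1 : (0:ℝ) ≤ s := hs.1
          have h2 : (0:ℝ) ≤ 1 - s := by linarith [hs.2]
          positivity
        rw [norm_smul, Real.norm_of_nonneg hc]
        exact mul_le_mul_of_nonneg_left (hmax s hs) hc
    have hint : (∫ s in (0:ℝ)..1,
        (s ^ k * (1 - s) ^ l / (k.factorial * l.factorial : ℝ)) * M)
        = M / ((n+1).factorial : ℝ) := by
      rw [show (fun s : ℝ => (s ^ k * (1 - s) ^ l / (k.factorial * l.factorial : ℝ)) * M)
          = (fun s : ℝ => (M / (k.factorial * l.factorial : ℝ)) * (s ^ k * (1 - s) ^ l)) from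
          by funext s; ring]
      rw [intervalIntegral.integral_const_mul, beta_nat' k l, hkl]
      have h1 : (k.factorial : ℝ) ≠ 0 := by positivity
      have h2 : (l.factorial : ℝ) ≠ 0 := by positivity
      have h3 : ((n+1).factorial : ℝ) ≠ 0 := by positivity
      field_simp
    rw [← hint]
    exact hnorm.trans hmono
  have hfactpos : ∀ n : ℕ, (0:ℝ) < ((n+1).factorial : ℝ) := fun n => by positivity
  have ha_le : ∀ n, a n ≤ M := by
    intro n
    have h1 : (Finset.range (n+1)).sup' ⟨0, Finset.mem_range.mpr (Nat.succ_pos n)⟩ (fun k => ‖L k (n - k)‖)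
        ≤ M / ((n+1).factorial : ℝ) :=
      Finset.sup'_le _ _ fun k hk => upper n k (Finset.mem_range_succ_iff.mp hk)
    calc a n ≤ ((n+1).factorial : ℝ) * (M / ((n+1).factorial : ℝ)) :=
          mul_le_mul_of_nonneg_left h1 (le_of_lt (hfactpos n))
      _ = M := by field_simp
  have ha_nonneg : ∀ n, 0 ≤ a n := by
    intro n
    apply mul_nonneg (le_of_lt (hfactpos n))
    have h0 : (0:ℕ) ∈ Finset.range (n+1) := Finset.mem_range_succ_iff.mpr (Nat.zero_le n)
    exact le_trans (norm_nonneg (L 0 (n - 0)))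
      (Finset.le_sup' (fun k => ‖L k (n - k)‖) h0)
  -- moment identity
  have hmom : ∀ n k l : ℕ, k + l = n →
      ((n+1).factorial : ℝ)/((k.factorial : ℝ) * (l.factorial : ℝ)) *
        ∫ s in (0:ℝ)..1, s^k*(1-s)^l*(s-s₀)^2
      = ((k:ℝ)+1)*((k:ℝ)+2)/((((n:ℝ))+2)*(((n:ℝ))+3))
        - 2*s₀*((k:ℝ)+1)/(((n:ℝ))+2) + s₀^2 := by
    intro n k l hkl
    have hsplit : (∫ s in (0:ℝ)..1, s^k*(1-s)^l*(s-s₀)^2)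
        = (∫ s in (0:ℝ)..1, s^(k+2)*(1-s)^l)
          - 2*s₀*(∫ s in (0:ℝ)..1, s^(k+1)*(1-s)^l)
          + s₀^2*(∫ s in (0:ℝ)..1, s^k*(1-s)^l) := by
      rw [← intervalIntegral.integral_const_mul, ← intervalIntegral.integral_const_mul,
        ← intervalIntegral.integral_sub (cont_ii' _ (by fun_prop)) (cont_ii' _ (by fun_prop)),
        ← intervalIntegral.integral_add (by
          apply cont_ii'; fun_prop) (cont_ii' _ (by fun_prop))]
      apply integral_congr; intro s _; ring
    rw [hsplit, beta_nat', beta_nat', beta_nat']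
    have i1 : k+2+l+1 = n+3 := by omega
    have i2 : k+1+l+1 = n+2 := by omega
    have i3 : k+l+1 = n+1 := by omega
    rw [i1, i2, i3]
    have f1 : ((n+3).factorial : ℝ) = ((n:ℝ)+3)*((n:ℝ)+2)*((n+1).factorial : ℝ) := by
      rw [show n+3 = (n+2)+1 from rfl, Nat.factorial_succ, show n+2 = (n+1)+1 from rfl,
        Nat.factorial_succ]
      push_cast; ring
    have f2 : ((n+2).factorial : ℝ) = ((n:ℝ)+2)*((n+1).factorial : ℝ) := by
      rw [show n+2 = (n+1)+1 from rfl, Nat.factorial_succ]; push_cast; ring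
    have f3 : ((k+2).factorial : ℝ) = ((k:ℝ)+2)*((k:ℝ)+1)*(k.factorial : ℝ) := by
      rw [show k+2 = (k+1)+1 from rfl, Nat.factorial_succ, Nat.factorial_succ]; push_cast; ring
    have f4 : ((k+1).factorial : ℝ) = ((k:ℝ)+1)*(k.factorial : ℝ) := by
      rw [Nat.factorial_succ]; push_cast; ring
    rw [f1, f2, f3, f4]
    have g1 : (k.factorial : ℝ) ≠ 0 := by positivity
    have g2 : (l.factorial : ℝ) ≠ 0 := by positivity
    have g3 : ((n+1).factorial : ℝ) ≠ 0 := by positivity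
    have g4 : ((n:ℝ)+2) ≠ 0 := by positivity
    have g5 : ((n:ℝ)+3) ≠ 0 := by positivity
    field_simp
  -- subsequence
  have hs00 : (0:ℝ) ≤ s₀ := hs₀mem.1
  have hs01 : s₀ ≤ 1 := hs₀mem.2
  set kf : ℕ → ℕ := fun n => ⌊s₀ * n⌋₊ with hkf
  have hk_le : ∀ n, kf n ≤ n := by
    intro n
    have h : s₀ * n ≤ (n:ℝ) := by nlinarith [Nat.cast_nonneg (α := ℝ) n]
    calc kf n ≤ ⌊(n:ℝ)⌋₊ := Nat.floor_mono h
      _ = n := Nat.floor_natCast n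
  have hk1 : ∀ n, (kf n : ℝ) ≤ s₀ * n := fun n => Nat.floor_le (by positivity)
  have hk2 : ∀ n, s₀ * n < kf n + 1 := fun n => Nat.lt_floor_add_one _
  set v : ℕ → EuclideanSpace ℝ (Fin m) :=
    fun n => ((n+1).factorial : ℝ) • L (kf n) (n - kf n) with hvdef
  -- concentration
  have hvt : Tendsto v atTop (nhds (γ' s₀)) := by
    rw [Metric.tendsto_atTop]
    intro ε hε
    have hUC := isCompact_Icc.uniformContinuousOn_of_continuous hγ'
    obtain ⟨δ, hδ, hδ'⟩ := Metric.uniformContinuousOn_iff.mp hUC (ε/2) (by linarith)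
    set c₂ : ℝ := 2*M/δ^2 with hc₂
    have hc₂0 : 0 ≤ c₂ := by positivity
    obtain ⟨N, hN⟩ := exists_nat_ge (20*c₂/ε)
    refine ⟨N, fun n hn => ?_⟩
    set k := kf n with hk
    set l := n - kf n with hl
    have hkl : k + l = n := by have := hk_le n; omega
    set A : ℝ := ((n+1).factorial : ℝ)/((k.factorial : ℝ) * (l.factorial : ℝ)) with hA
    have hfk : (k.factorial : ℝ) ≠ 0 := by positivity
    have hfl : (l.factorial : ℝ) ≠ 0 := by positivity
    have hA0 : 0 ≤ A := by positivity
    have hwcont : ContinuousOn (fun s : ℝ => (A * (s^k*(1-s)^l)) • γ' s) (Set.Icc (0:ℝ) 1) :=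
      ((continuous_const.mul ((continuous_pow k).mul
        ((continuous_const.sub continuous_id).pow l))).continuousOn).smul hγ'
    have hwint : IntervalIntegrable (fun s : ℝ => (A * (s^k*(1-s)^l)) • γ' s) volume 0 1 := by
      apply ContinuousOn.intervalIntegrable; rw [huIcc]; exact hwcont
    have hw_eq : v n = ∫ s in (0:ℝ)..1, (A * (s^k*(1-s)^l)) • γ' s := by
      rw [hvdef]
      simp only
      rw [hLvec k l, ← intervalIntegral.integral_smul]
      apply integral_congr; intro s _
      simp only [smul_smul]
      congr 1
      rw [hA]
      field_simp
    have hone : (∫ s in (0:ℝ)..1, A * (s^k*(1-s)^l)) = 1 := by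
      rw [intervalIntegral.integral_const_mul, beta_nat', show k+l+1 = n+1 from by omega, hA]
      field_simp
    have hdiff : v n - γ' s₀ = ∫ s in (0:ℝ)..1, (A * (s^k*(1-s)^l)) • (γ' s - γ' s₀) := by
      have hconst : IntervalIntegrable
          (fun s : ℝ => (A * (s^k*(1-s)^l)) • γ' s₀) volume 0 1 := by
        apply ContinuousOn.intervalIntegrable; rw [huIcc]
        exact ((continuous_const.mul ((continuous_pow k).mul
          ((continuous_const.sub continuous_id).pow l))).continuousOn).smul continuousOn_const
      have h1 : (∫ s in (0:ℝ)..1, (A*(s^k*(1-s)^l)) • (γ' s - γ' s₀))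
          = (∫ s in (0:ℝ)..1, (A*(s^k*(1-s)^l)) • γ' s)
            - ∫ s in (0:ℝ)..1, (A*(s^k*(1-s)^l)) • γ' s₀ := by
        rw [← intervalIntegral.integral_sub hwint hconst]
        apply integral_congr; intro s _
        simp only [smul_sub]
      have h2 : (∫ s in (0:ℝ)..1, (A*(s^k*(1-s)^l)) • γ' s₀) = γ' s₀ := by
        rw [intervalIntegral.integral_smul_const, hone, one_smul]
      rw [h1, h2, hw_eq]
    have hb1 : ‖v n - γ' s₀‖ ≤ ∫ s in (0:ℝ)..1,
        (A*(s^k*(1-s)^l)) * (ε/2 + c₂*(s-s₀)^2) := by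
      rw [hdiff]
      refine (intervalIntegral.norm_integral_le_integral_norm zero_le_one).trans ?_
      apply integral_mono_on zero_le_one
      · apply ContinuousOn.intervalIntegrable; rw [huIcc]
        exact (((continuous_const.mul ((continuous_pow k).mul
          ((continuous_const.sub continuous_id).pow l))).continuousOn).smul
          (hγ'.sub continuousOn_const)).norm
      · exact cont_ii' _ (by fun_prop)
      · intro s hs
        have h1s : (0:ℝ) ≤ 1 - s := by linarith [hs.2]
        have h0s : (0:ℝ) ≤ s := hs.1
        have hw0 : 0 ≤ A*(s^k*(1-s)^l) := by positivity
        rw [norm_smul, Real.norm_of_nonneg hw0]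
        apply mul_le_mul_of_nonneg_left _ hw0
        by_cases hcase : dist s s₀ < δ
        · have hd := hδ' s hs s₀ hs₀mem hcase
          rw [dist_eq_norm] at hd
          nlinarith [mul_nonneg hc₂0 (sq_nonneg (s-s₀))]
        · push_neg at hcase
          have habs : δ ≤ |s - s₀| := by rwa [Real.dist_eq] at hcase
          have hdd : δ^2 ≤ (s-s₀)^2 := by
            nlinarith [abs_nonneg (s-s₀), sq_abs (s-s₀)]
          have h2M : ‖γ' s - γ' s₀‖ ≤ 2*M := by
            calc ‖γ' s - γ' s₀‖ ≤ ‖γ' s‖ + ‖γ' s₀‖ := norm_sub_le _ _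
              _ ≤ M + M := add_le_add (hmax s hs) le_rfl
              _ = 2*M := by ring
          have hkey : 2*M ≤ c₂ * (s-s₀)^2 := by
            rw [hc₂, div_mul_eq_mul_div, le_div_iff₀ (by positivity)]
            nlinarith [hM0]
          linarith
    have hsplit2 : (∫ s in (0:ℝ)..1, (A*(s^k*(1-s)^l)) * (ε/2 + c₂*(s-s₀)^2))
        = ε/2 + (c₂*A) * ∫ s in (0:ℝ)..1, s^k*(1-s)^l*(s-s₀)^2 := by
      rw [show (fun s : ℝ => (A*(s^k*(1-s)^l)) * (ε/2 + c₂*(s-s₀)^2))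
          = fun s : ℝ => (ε/2) * (A*(s^k*(1-s)^l)) + (c₂*A) * (s^k*(1-s)^l*(s-s₀)^2) from
          by funext s; ring]
      rw [intervalIntegral.integral_add (cont_ii' _ (by fun_prop)) (cont_ii' _ (by fun_prop)),
        intervalIntegral.integral_const_mul, hone, mul_one, intervalIntegral.integral_const_mul]
    have hEn : A * (∫ s in (0:ℝ)..1, s^k*(1-s)^l*(s-s₀)^2) ≤ 10/((n:ℝ)+2) := by
      rw [hA, hmom n k l hkl]
      have h1 := hk1 n
      have h2 := hk2 n
      have hn2 : (0:ℝ) < (n:ℝ)+2 := by positivity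
      have hn3 : (0:ℝ) < (n:ℝ)+3 := by positivity
      set K := (kf n : ℝ) with hK
      have hK0 : (0:ℝ) ≤ K := Nat.cast_nonneg _
      have hcomb : (K+1)*(K+2)/(((n:ℝ)+2)*((n:ℝ)+3)) - 2*s₀*(K+1)/((n:ℝ)+2) + s₀^2
          = ((K+1)*(K+2) - 2*s₀*(K+1)*((n:ℝ)+3) + s₀^2*((n:ℝ)+2)*((n:ℝ)+3))
            / (((n:ℝ)+2)*((n:ℝ)+3)) := by
        field_simp
      rw [hcomb, div_le_div_iff₀ (by positivity) hn2]
      have h_t0 : 0 ≤ s₀*(n:ℝ) - K := by linarith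
      have h_t1 : s₀*(n:ℝ) - K ≤ 1 := by linarith
      have hsuff : (K+1)*(K+2) - 2*s₀*(K+1)*((n:ℝ)+3) + s₀^2*((n:ℝ)+2)*((n:ℝ)+3)
          ≤ 10*((n:ℝ)+3) := by
        nlinarith [mul_nonneg (Nat.cast_nonneg (α := ℝ) n) (sq_nonneg (1 - 2*s₀)),
          mul_nonneg h_t0 (by linarith : (0:ℝ) ≤ 1 - (s₀*(n:ℝ) - K)),
          mul_nonneg h_t0 (by linarith : (0:ℝ) ≤ 1 - s₀),
          mul_nonneg hs00 (by linarith : (0:ℝ) ≤ 1 - s₀)]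
      nlinarith [hsuff, hn2]
    have hfin : ‖v n - γ' s₀‖ ≤ ε/2 + c₂ * (10/((n:ℝ)+2)) := by
      have := hb1.trans (le_of_eq hsplit2)
      have h3 : (c₂*A) * (∫ s in (0:ℝ)..1, s^k*(1-s)^l*(s-s₀)^2)
          ≤ c₂ * (10/((n:ℝ)+2)) := by
        rw [mul_assoc]
        exact mul_le_mul_of_nonneg_left hEn hc₂0
      linarith
    have hlast : c₂ * (10/((n:ℝ)+2)) < ε/2 := by
      have hnN : (N:ℝ) ≤ n := Nat.cast_le.mpr hn
      have hN' : 20*c₂ ≤ ε * N := by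
        rw [div_le_iff₀ hε] at hN
        linarith [hN]
      have key : 20*c₂ < ε*((n:ℝ)+2) := by nlinarith
      rw [show c₂ * (10/((n:ℝ)+2)) = (c₂*10)/((n:ℝ)+2) from by ring,
        div_lt_iff₀ (by positivity)]
      nlinarith
    rw [dist_eq_norm]
    linarith
  -- lower bound sequence
  set b : ℕ → ℝ := fun n => ((n+1).factorial : ℝ) * ‖L (kf n) (n - kf n)‖ with hbdef
  have hbv : ∀ n, b n = ‖v n‖ := by
    intro n
    rw [hbdef, hvdef]
    simp only
    rw [norm_smul, Real.norm_natCast]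
  have hbt : Tendsto b atTop (nhds M) := by
    have : Tendsto (fun n => ‖v n‖) atTop (nhds ‖γ' s₀‖) := hvt.norm
    rw [show b = fun n => ‖v n‖ from funext hbv]
    exact this
  have hb_nonneg : ∀ n, 0 ≤ b n :=
    fun n => mul_nonneg (le_of_lt (hfactpos n)) (norm_nonneg _)
  have hab : ∀ n, b n ≤ a n := by
    intro n
    apply mul_le_mul_of_nonneg_left _ (le_of_lt (hfactpos n))
    exact Finset.le_sup' (fun k => ‖L k (n - k)‖)
      (Finset.mem_range_succ_iff.mpr (hk_le n))
  rw [hsup]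
  apply le_antisymm
  · exact Filter.limsup_le_of_le (isCoboundedUnder_le_of_le atTop ha_nonneg)
      (Eventually.of_forall ha_le)
  · rw [← hbt.limsup_eq]
    exact Filter.limsup_le_limsup (Eventually.of_forall hab)
      (isCoboundedUnder_le_of_le atTop hb_nonneg)
      (Filter.isBoundedUnder_of ⟨M, ha_le⟩)
end
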